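/- Let d ≥ 1. For each ε ∈ (0, 1] let G^ε be a finite nonnegative Borel measure on ℝ^d, and let G be a finite nonnegative Borel measure on ℝ^d with ∫ (‖v‖ + ‖v‖²) G(dv) < ∞; set a₀ := ∫ v G(dv) ∈ ℝ^d and c₀ := ∫ v vᵀ G(dv) (a d×d matrix). Let a₁, a ∈ ℝ^d and let c be a d×d real matrix. Assume: (i) ∫ v G^ε(dv) = ε a₁ + ε² a + ε² θ_a(ε) with θ_a(ε) → 0 as ε → 0; (ii) ∫ v vᵀ G^ε(dv) = ε² c + ε² θ_c(ε) with θ_c(ε) → 0 as ε → 0; (iii) for every bounded Borel function g : ℝ^d → ℝ with g(v)/‖v‖² → 0 as v → 0, one has ε^{-2} ∫ g dG^ε → ∫ g dG as ε → 0; (iv) uniform square-integrability: lim_{c → ∞} sup_{ε ∈ (0,1]} ε^{-2} ∫_{‖v‖ > c} ‖v‖² G^ε(dv) = 0. Then for every bounded, twice continuously differentiable function φ : ℝ^d → ℝ with bounded first and second derivatives, and every u ∈ ℝ^d: lim_{ε → 0} [ ε^{-2} ∫ (φ(u + v) − φ(u)) G^ε(dv) − ε^{-1} ⟨a₁, ∇φ(u)⟩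 ] = ⟨a − a₀, ∇φ(u)⟩ + ½ tr((c − c₀) ∇²φ(u)) + ∫ (φ(u + v) − φ(u)) G(dv). -/

import Mathlib

open MeasureTheory Filter Topology RealInnerProductSpace
open scoped ENNReal NNReal

section Helpers
variable {E : Type*} [NormedAddCommGroup E] [NormedSpace ℝ E]


variable {E : Type*} [NormedAddCommGroup E] [NormedSpace ℝ E]

lemma norm_fderiv_fderiv (φ : E → ℝ) (z : E) :
    ‖fderiv ℝ (fderiv ℝ φ) z‖ = ‖iteratedFDeriv ℝ 2 φ z‖ := by
  have h0 : ‖iteratedFDeriv ℝ 0 (fderiv ℝ (fderiv ℝ φ)) z‖ = ‖iteratedFDeriv ℝ 1 (fderiv ℝ φ) z‖ :=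
    norm_iteratedFDeriv_fderiv
  have h1 : ‖iteratedFDeriv ℝ 1 (fderiv ℝ φ) z‖ = ‖iteratedFDeriv ℝ 2 φ z‖ :=
    norm_iteratedFDeriv_fderiv
  rw [← h1, ← h0, norm_iteratedFDeriv_zero]

/-- abstract second-order mean value bound -/
lemma taylor_two_bound {φ : E → ℝ} (hφ : ContDiff ℝ 2 φ) (u v : E) {δ : ℝ}
    (hsymm : ∀ w z : E, fderiv ℝ (fderiv ℝ φ) u w z = fderiv ℝ (fderiv ℝ φ) u z w)
    (hb : ∀ x ∈ Metric.closedBall u ‖v‖,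
      ‖fderiv ℝ φ x - fderiv ℝ φ u - fderiv ℝ (fderiv ℝ φ) u (x - u)‖ ≤ δ) :
    |φ (u + v) - φ u - fderiv ℝ φ u v
      - (1/2) * fderiv ℝ (fderiv ℝ φ) u v v| ≤ δ * ‖v‖ := by
  set D := fderiv ℝ (fderiv ℝ φ) u with hD
  have hdiff : Differentiable ℝ φ := hφ.differentiable (by norm_num)
  set ψ : E → ℝ := fun x => φ x - fderiv ℝ φ u x - (1/2) * D (x - u) (x - u) with hψ
  have hder : ∀ x : E, HasFDerivAt ψ (fderiv ℝ φ x - fderiv ℝ φ u - D (x - u)) x := by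
    intro x
    have h1 : HasFDerivAt φ (fderiv ℝ φ x) x := (hdiff x).hasFDerivAt
    have h2 : HasFDerivAt (fun y : E => fderiv ℝ φ u y) (fderiv ℝ φ u) x :=
      (fderiv ℝ φ u).hasFDerivAt
    have h3 : HasFDerivAt (fun y : E => D (y - u) (y - u))
        (D.precompR E (x - u) (ContinuousLinearMap.id ℝ E)
          + D.precompL E (ContinuousLinearMap.id ℝ E) (x - u)) x :=
      D.hasFDerivAt_of_bilinear ((hasFDerivAt_id x).sub_const u) ((hasFDerivAt_id x).sub_const u)
    have h4 := (h1.sub h2).sub (h3.const_mul (1/2 : ℝ))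
    convert h4 using 1
    · rfl
    · rfl
    · rfl
    ext w
    simp only [ContinuousLinearMap.coe_sub', Pi.sub_apply, ContinuousLinearMap.smul_apply,
      ContinuousLinearMap.add_apply, ContinuousLinearMap.precompR_apply,
      ContinuousLinearMap.precompL_apply, ContinuousLinearMap.coe_id', id_eq,
      ContinuousLinearMap.compL_apply, ContinuousLinearMap.coe_comp', Function.comp_apply]
    rw [hsymm w (x - u), smul_eq_mul]
    ring
  have hmem1 : u ∈ Metric.closedBall u ‖v‖ := by
    simp [Metric.mem_closedBall, norm_nonneg]
  have hmem2 : u + v ∈ Metric.closedBall u ‖v‖ := by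
    simp [Metric.mem_closedBall, dist_eq_norm]
  have := (convex_closedBall u ‖v‖).norm_image_sub_le_of_norm_hasFDerivWithin_le
    (fun x _ => (hder x).hasFDerivWithinAt) hb hmem1 hmem2
  have heq : ψ (u + v) - ψ u = φ (u + v) - φ u - fderiv ℝ φ u v - (1/2) * D v v := by
    have hFa : (fderiv ℝ φ u) (u + v) = fderiv ℝ φ u u + fderiv ℝ φ u v := map_add _ _ _
    simp only [hψ, add_sub_cancel_left, sub_self, hFa, map_zero,
      ContinuousLinearMap.zero_apply, mul_zero]
    ring
  rw [heq, add_sub_cancel_left] at this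
  simpa [Real.norm_eq_abs] using this


variable {E : Type*} [NormedAddCommGroup E] [NormedSpace ℝ E]

lemma fderiv_lip {φ : E → ℝ} (hφ : ContDiff ℝ 2 φ) {M : ℝ}
    (hM : ∀ z, ‖iteratedFDeriv ℝ 2 φ z‖ ≤ M) (x y : E) :
    ‖fderiv ℝ φ x - fderiv ℝ φ y‖ ≤ M * ‖x - y‖ := by
  have hF : ContDiff ℝ 1 (fderiv ℝ φ) := hφ.fderiv_right (le_refl _)
  have hFd : Differentiable ℝ (fderiv ℝ φ) := hF.differentiable (by norm_num)
  exact (convex_univ (E := E) (𝕜 := ℝ)).norm_image_sub_le_of_norm_hasFDerivWithin_le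
    (fun z _ => (hFd z).hasFDerivAt.hasFDerivWithinAt)
    (fun z _ => by rw [norm_fderiv_fderiv]; exact hM z)
    (Set.mem_univ y) (Set.mem_univ x)

lemma taylor_global {φ : E → ℝ} (hφ : ContDiff ℝ 2 φ) {M : ℝ}
    (hM : ∀ z, ‖iteratedFDeriv ℝ 2 φ z‖ ≤ M) (u : E)
    (hsymm : ∀ w z : E, fderiv ℝ (fderiv ℝ φ) u w z = fderiv ℝ (fderiv ℝ φ) u z w) (v : E) :
    |φ (u + v) - φ u - fderiv ℝ φ u v
      - (1/2) * fderiv ℝ (fderiv ℝ φ) u v v| ≤ (2 * M) * ‖v‖ ^ 2 := by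
  have hMn : 0 ≤ M := le_trans (norm_nonneg _) (hM u)
  have hb : ∀ x ∈ Metric.closedBall u ‖v‖,
      ‖fderiv ℝ φ x - fderiv ℝ φ u - fderiv ℝ (fderiv ℝ φ) u (x - u)‖ ≤ 2 * M * ‖v‖ := by
    intro x hx
    have hxu : ‖x - u‖ ≤ ‖v‖ := by
      rw [Metric.mem_closedBall, dist_eq_norm] at hx; exact hx
    calc ‖fderiv ℝ φ x - fderiv ℝ φ u - fderiv ℝ (fderiv ℝ φ) u (x - u)‖
        ≤ ‖fderiv ℝ φ x - fderiv ℝ φ u‖ + ‖fderiv ℝ (fderiv ℝ φ) u (x - u)‖ := norm_sub_le _ _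
      _ ≤ M * ‖x - u‖ + ‖fderiv ℝ (fderiv ℝ φ) u‖ * ‖x - u‖ := by
          gcongr
          · exact fderiv_lip hφ hM x u
          · exact ContinuousLinearMap.le_opNorm _ _
      _ ≤ M * ‖v‖ + M * ‖v‖ := by
          gcongr
          rw [norm_fderiv_fderiv]; exact hM u
      _ = 2 * M * ‖v‖ := by ring
  have := taylor_two_bound hφ u v hsymm hb
  calc |φ (u + v) - φ u - fderiv ℝ φ u v - (1/2) * fderiv ℝ (fderiv ℝ φ) u v v|
      ≤ 2 * M * ‖v‖ * ‖v‖ := this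
    _ = (2 * M) * ‖v‖ ^ 2 := by ring

lemma taylor_littleO {φ : E → ℝ} (hφ : ContDiff ℝ 2 φ) (u : E)
    (hsymm : ∀ w z : E, fderiv ℝ (fderiv ℝ φ) u w z = fderiv ℝ (fderiv ℝ φ) u z w) :
    Tendsto (fun v : E => (φ (u + v) - φ u - fderiv ℝ φ u v
      - (1/2) * fderiv ℝ (fderiv ℝ φ) u v v) / ‖v‖ ^ 2)
      (𝓝[≠] (0 : E)) (𝓝 0) := by
  rw [Metric.tendsto_nhdsWithin_nhds]
  intro η hη
  have hF : ContDiff ℝ 1 (fderiv ℝ φ) := hφ.fderiv_right (le_refl _)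
  have hFd : HasFDerivAt (fderiv ℝ φ) (fderiv ℝ (fderiv ℝ φ) u) u :=
    (hF.differentiable (by norm_num) u).hasFDerivAt
  have hlo := hFd.isLittleO
  have hev := hlo.def (by positivity : (0:ℝ) < η/2)
  rw [Metric.eventually_nhds_iff] at hev
  obtain ⟨ρ, hρ, hball⟩ := hev
  refine ⟨ρ/2, by positivity, ?_⟩
  intro v hv hdist
  have hvne : v ≠ 0 := hv
  have hvpos : (0:ℝ) < ‖v‖ := norm_pos_iff.2 hvne
  have hvlt : ‖v‖ < ρ/2 := by simpa [dist_eq_norm] using hdist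
  have hb : ∀ x ∈ Metric.closedBall u ‖v‖,
      ‖fderiv ℝ φ x - fderiv ℝ φ u - fderiv ℝ (fderiv ℝ φ) u (x - u)‖ ≤ (η/2) * ‖v‖ := by
    intro x hx
    have hxu : ‖x - u‖ ≤ ‖v‖ := by
      rw [Metric.mem_closedBall, dist_eq_norm] at hx; exact hx
    have hxρ : dist x u < ρ := by
      rw [dist_eq_norm]
      calc ‖x - u‖ ≤ ‖v‖ := hxu
        _ < ρ/2 := hvlt
        _ < ρ := by linarith
    calc ‖fderiv ℝ φ x - fderiv ℝ φ u - fderiv ℝ (fderiv ℝ φ) u (x - u)‖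
        ≤ η/2 * ‖x - u‖ := by simpa using hball hxρ
      _ ≤ η/2 * ‖v‖ := by gcongr
  have hbnd := taylor_two_bound hφ u v hsymm hb
  have : |φ (u + v) - φ u - fderiv ℝ φ u v - (1/2) * fderiv ℝ (fderiv ℝ φ) u v v| / ‖v‖^2
      ≤ η/2 := by
    rw [div_le_iff₀ (by positivity)]
    calc |φ (u + v) - φ u - fderiv ℝ φ u v - (1/2) * fderiv ℝ (fderiv ℝ φ) u v v|
        ≤ η/2 * ‖v‖ * ‖v‖ := hbnd
      _ = η/2 * ‖v‖^2 := by ring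
  rw [Real.dist_eq, sub_zero, abs_div, abs_of_nonneg (by positivity : (0:ℝ) ≤ ‖v‖^2)]
  calc |φ (u + v) - φ u - fderiv ℝ φ u v - (1/2) * fderiv ℝ (fderiv ℝ φ) u v v| / ‖v‖^2
      ≤ η/2 := this
    _ < η := by linarith


end Helpers

section MTHelpers
variable {E : Type*} [NormedAddCommGroup E] [MeasurableSpace E] [OpensMeasurableSpace E]

variable {E : Type*} [NormedAddCommGroup E] [MeasurableSpace E] [OpensMeasurableSpace E]

/-- Conversion: an ENNReal tail bound gives a real tail bound. -/
lemma tail_real {μ : Measure E} {s : Set E} {t δ : ℝ} (ht : 0 ≤ t) (hδ : 0 ≤ δ)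
    (key : ENNReal.ofReal t * ∫⁻ v in s, ENNReal.ofReal (‖v‖^2) ∂μ ≤ ENNReal.ofReal δ) :
    t * ∫ v in s, ‖v‖^2 ∂μ ≤ δ := by
  have hnn : 0 ≤ᵐ[μ.restrict s] fun v : E => ‖v‖^2 :=
    Filter.Eventually.of_forall fun v => by positivity
  have hmeas : AEStronglyMeasurable (fun v : E => ‖v‖^2) (μ.restrict s) :=
    ((continuous_norm.pow 2).aestronglyMeasurable)
  rw [MeasureTheory.integral_eq_lintegral_of_nonneg_ae hnn hmeas]
  rcases eq_or_lt_of_le ht with h0 | htpos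
  · rw [← h0]; simpa using hδ
  · have hLne : (∫⁻ v in s, ENNReal.ofReal (‖v‖^2) ∂μ) ≠ ⊤ := by
      intro hL
      rw [hL, ENNReal.mul_top (by simp [ENNReal.ofReal_eq_zero]; linarith)] at key
      exact ENNReal.ofReal_ne_top (top_le_iff.1 key)
    have h2 := ENNReal.toReal_mono ENNReal.ofReal_ne_top key
    rw [ENNReal.toReal_mul, ENNReal.toReal_ofReal ht, ENNReal.toReal_ofReal hδ] at h2
    exact h2

/-- Square integrability of the norm w.r.t. `Gε ε` from the uniform integrability condition. -/
lemma sq_integrable (Gε : ℝ → Measure E)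
    (hGεfin : ∀ ε : ℝ, 0 < ε → ε ≤ 1 → IsFiniteMeasure (Gε ε))
    (hUI : Tendsto (fun C : ℝ => ⨆ ε : {ε : ℝ // 0 < ε ∧ ε ≤ 1},
        ENNReal.ofReal ((ε : ℝ)⁻¹ ^ 2) *
          ∫⁻ v in {v : E | C < ‖v‖}, ENNReal.ofReal (‖v‖ ^ 2) ∂(Gε ε)) atTop (𝓝 0))
    {ε : ℝ} (hε : 0 < ε) (hε1 : ε ≤ 1) :
    Integrable (fun v : E => ‖v‖ ^ 2) (Gε ε) := by
  haveI := hGεfin ε hε hε1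
  obtain ⟨C₀, hC₀⟩ := (ENNReal.tendsto_nhds_zero.1 hUI 1 (by norm_num)).exists_forall_of_atTop
  set C := max C₀ 1 with hC
  have hsup := hC₀ C (le_max_left _ _)
  have hkey : ENNReal.ofReal (ε⁻¹ ^ 2) *
      ∫⁻ v in {v : E | C < ‖v‖}, ENNReal.ofReal (‖v‖ ^ 2) ∂(Gε ε) ≤ 1 :=
    le_trans (le_iSup (fun ε' : {ε : ℝ // 0 < ε ∧ ε ≤ 1} =>
      ENNReal.ofReal ((ε' : ℝ)⁻¹ ^ 2) *
        ∫⁻ v in {v : E | C < ‖v‖}, ENNReal.ofReal (‖v‖ ^ 2) ∂(Gε ε')) ⟨ε, hε, hε1⟩) hsup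
  have hane : ENNReal.ofReal (ε⁻¹ ^ 2) ≠ 0 := by
    simp only [ne_eq, ENNReal.ofReal_eq_zero, not_le]
    positivity
  have htail : (∫⁻ v in {v : E | C < ‖v‖}, ENNReal.ofReal (‖v‖ ^ 2) ∂(Gε ε)) ≠ ⊤ := by
    intro hL
    rw [hL, ENNReal.mul_top hane] at hkey
    simp at hkey
  have hms : MeasurableSet {v : E | C < ‖v‖} :=
    measurableSet_lt measurable_const measurable_norm
  have htotal : (∫⁻ v, ENNReal.ofReal (‖v‖ ^ 2) ∂(Gε ε)) < ⊤ := by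
    rw [← MeasureTheory.lintegral_add_compl _ hms]
    have hcompl : (∫⁻ v in {v : E | C < ‖v‖}ᶜ, ENNReal.ofReal (‖v‖ ^ 2) ∂(Gε ε))
        ≤ ENNReal.ofReal (C ^ 2) * (Gε ε) Set.univ := by
      calc (∫⁻ v in {v : E | C < ‖v‖}ᶜ, ENNReal.ofReal (‖v‖ ^ 2) ∂(Gε ε))
          ≤ ∫⁻ _ in {v : E | C < ‖v‖}ᶜ, ENNReal.ofReal (C ^ 2) ∂(Gε ε) := by
            refine setLIntegral_mono measurable_const fun v hv => ?_
            refine ENNReal.ofReal_le_ofReal ?_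
            have hv' : ‖v‖ ≤ C := not_lt.1 hv
            have : (0:ℝ) ≤ ‖v‖ := norm_nonneg _
            nlinarith
        _ = ENNReal.ofReal (C ^ 2) * (Gε ε) {v : E | C < ‖v‖}ᶜ := by
            rw [MeasureTheory.setLIntegral_const]
        _ ≤ ENNReal.ofReal (C ^ 2) * (Gε ε) Set.univ := by
            gcongr
            exact Set.subset_univ _
    calc (∫⁻ v in {v : E | C < ‖v‖}, ENNReal.ofReal (‖v‖ ^ 2) ∂(Gε ε))
          + ∫⁻ v in {v : E | C < ‖v‖}ᶜ, ENNReal.ofReal (‖v‖ ^ 2) ∂(Gε ε)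
        ≤ (∫⁻ v in {v : E | C < ‖v‖}, ENNReal.ofReal (‖v‖ ^ 2) ∂(Gε ε))
          + ENNReal.ofReal (C ^ 2) * (Gε ε) Set.univ := by gcongr
      _ < ⊤ := by
          refine ENNReal.add_lt_top.2 ⟨htail.lt_top, ?_⟩
          exact ENNReal.mul_lt_top ENNReal.ofReal_lt_top (measure_lt_top _ _)
  refine ⟨(continuous_norm.pow 2).aestronglyMeasurable, ?_⟩
  rw [MeasureTheory.hasFiniteIntegral_iff_norm]
  calc (∫⁻ v, ENNReal.ofReal ‖(‖v‖:ℝ) ^ 2‖ ∂(Gε ε))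
      = ∫⁻ v, ENNReal.ofReal (‖v‖ ^ 2) ∂(Gε ε) := by
        congr 1; funext v; rw [Real.norm_eq_abs, abs_of_nonneg (by positivity)]
    _ < ⊤ := htotal

/-- G-side: tail integrals of an integrable function tend to zero. -/
lemma tail_tendsto_zero (G : Measure E) (h : E → ℝ) (hc : Continuous h)
    (hInt : Integrable h G) :
    Tendsto (fun C : ℝ => ∫ v in {v : E | C < ‖v‖}, |h v| ∂G) atTop (𝓝 0) := by
  have hms : ∀ C : ℝ, MeasurableSet {v : E | C < ‖v‖} := fun C =>
    measurableSet_lt measurable_const measurable_norm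
  have key : Tendsto (fun C : ℝ =>
      ∫ v, Set.indicator {v : E | C < ‖v‖} (fun v => |h v|) v ∂G) atTop (𝓝 (∫ _, (0:ℝ) ∂G)) := by
    refine MeasureTheory.tendsto_integral_filter_of_dominated_convergence
      (fun v => |h v|) ?_ ?_ hInt.abs ?_
    · exact Filter.Eventually.of_forall fun C =>
        ((hc.abs.measurable).indicator (hms C)).aestronglyMeasurable
    · refine Filter.Eventually.of_forall fun C => Filter.Eventually.of_forall fun v => ?_
      by_cases hv : v ∈ {v : E | C < ‖v‖}
      · rw [Set.indicator_of_mem hv]; simp [Real.norm_eq_abs, abs_abs]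
      · rw [Set.indicator_of_notMem hv]; simp [abs_nonneg]
    · refine Filter.Eventually.of_forall fun v => ?_
      refine Tendsto.congr' ?_ tendsto_const_nhds
      filter_upwards [eventually_ge_atTop ‖v‖] with C hC
      rw [Set.indicator_of_notMem]
      simp only [Set.mem_setOf_eq, not_lt]
      exact hC
  rw [MeasureTheory.integral_zero] at key
  refine key.congr fun C => ?_
  rw [MeasureTheory.integral_indicator (hms C)]

/-- The key approximation lemma: for `h` with `|h| ≤ K‖v‖²` and `h = o(‖v‖²)` at `0`,
`ε⁻² ∫ h dGε → ∫ h dG`. -/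
lemma lemmaA (Gε : ℝ → Measure E)
    (hGεfin : ∀ ε : ℝ, 0 < ε → ε ≤ 1 → IsFiniteMeasure (Gε ε))
    (G : Measure E) [IsFiniteMeasure G]
    (hpoisson : ∀ g : E → ℝ, Measurable g →
      (∃ M : ℝ, ∀ v, |g v| ≤ M) →
      Tendsto (fun v => g v / ‖v‖ ^ 2) (𝓝[≠] (0 : E)) (𝓝 0) →
      Tendsto (fun ε : ℝ => ε⁻¹ ^ 2 * ∫ v, g v ∂(Gε ε)) (𝓝[>] (0 : ℝ))
        (𝓝 (∫ v, g v ∂G)))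
    (hUI : Tendsto (fun C : ℝ => ⨆ ε : {ε : ℝ // 0 < ε ∧ ε ≤ 1},
        ENNReal.ofReal ((ε : ℝ)⁻¹ ^ 2) *
          ∫⁻ v in {v : E | C < ‖v‖}, ENNReal.ofReal (‖v‖ ^ 2) ∂(Gε ε)) atTop (𝓝 0))
    (h : E → ℝ) (hc : Continuous h) (K : ℝ) (hK : ∀ v, |h v| ≤ K * ‖v‖ ^ 2)
    (hlim : Tendsto (fun v => h v / ‖v‖ ^ 2) (𝓝[≠] (0 : E)) (𝓝 0))
    (hInt : Integrable h G) :
    Tendsto (fun ε : ℝ => ε⁻¹ ^ 2 * ∫ v, h v ∂(Gε ε)) (𝓝[>] (0 : ℝ))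
      (𝓝 (∫ v, h v ∂G)) := by
  set K' : ℝ := max K 1 with hK'def
  have hK'pos : 0 < K' := lt_of_lt_of_le one_pos (le_max_right _ _)
  have hK' : ∀ v : E, |h v| ≤ K' * ‖v‖ ^ 2 := fun v =>
    le_trans (hK v) (mul_le_mul_of_nonneg_right (le_max_left _ _) (by positivity))
  rw [Metric.tendsto_nhds]
  intro δ hδ
  -- choose the truncation level C
  have hUIev : ∀ᶠ C : ℝ in atTop, (⨆ ε : {ε : ℝ // 0 < ε ∧ ε ≤ 1},
      ENNReal.ofReal ((ε : ℝ)⁻¹ ^ 2) *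
        ∫⁻ v in {v : E | C < ‖v‖}, ENNReal.ofReal (‖v‖ ^ 2) ∂(Gε ε))
      ≤ ENNReal.ofReal (δ / (4 * K')) :=
    ENNReal.tendsto_nhds_zero.1 hUI _ (by simp [ENNReal.ofReal_pos]; positivity)
  have hGev : ∀ᶠ C : ℝ in atTop, ∫ v in {v : E | C < ‖v‖}, |h v| ∂G < δ / 4 := by
    have := tail_tendsto_zero G h hc hInt
    exact (this.eventually (eventually_lt_nhds (by positivity : (0:ℝ) < δ / 4))).mono
      fun C hC => hC
  obtain ⟨C, hCui, hCg, hCpos⟩ :=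
    (hUIev.and (hGev.and (eventually_gt_atTop (0:ℝ)))).exists
  -- the truncated function
  set s : Set E := {v : E | C < ‖v‖} with hs
  have hms : MeasurableSet s := measurableSet_lt measurable_const measurable_norm
  set g : E → ℝ := sᶜ.indicator h with hg
  have hmsc : MeasurableSet sᶜ := hms.compl
  have hgmeas : Measurable g := hc.measurable.indicator hmsc
  have hgbdd : ∃ M : ℝ, ∀ v, |g v| ≤ M := by
    refine ⟨K' * C ^ 2, fun v => ?_⟩
    by_cases hv : v ∈ sᶜ
    · rw [hg, Set.indicator_of_mem hv]
      have hvC : ‖v‖ ≤ C := not_lt.1 hv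
      have h0 : (0:ℝ) ≤ ‖v‖ := norm_nonneg _
      calc |h v| ≤ K' * ‖v‖ ^ 2 := hK' v
        _ ≤ K' * C ^ 2 := by gcongr
    · rw [hg, Set.indicator_of_notMem hv]
      simp only [abs_zero]
      positivity
  have hglim : Tendsto (fun v => g v / ‖v‖ ^ 2) (𝓝[≠] (0 : E)) (𝓝 0) := by
    refine Tendsto.congr' ?_ hlim
    have hev : ∀ᶠ v in 𝓝[≠] (0 : E), ‖v‖ ≤ C := by
      refine eventually_nhdsWithin_of_eventually_nhds ?_
      have : Metric.ball (0:E) C ∈ 𝓝 (0:E) := Metric.ball_mem_nhds _ hCpos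
      filter_upwards [this] with v hv
      rw [Metric.mem_ball, dist_zero_right] at hv
      exact le_of_lt hv
    filter_upwards [hev] with v hv
    rw [hg, Set.indicator_of_mem]
    simpa [hs] using not_lt.2 hv
  have hgpois := hpoisson g hgmeas hgbdd hglim
  have hgev : ∀ᶠ ε in 𝓝[>] (0:ℝ),
      dist (ε⁻¹ ^ 2 * ∫ v, g v ∂(Gε ε)) (∫ v, g v ∂G) < δ / 4 :=
    Metric.tendsto_nhds.1 hgpois (δ/4) (by positivity)
  have hmemIoo : ∀ᶠ ε in 𝓝[>] (0:ℝ), ε ∈ Set.Ioo (0:ℝ) 1 :=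
    Ioo_mem_nhdsGT_of_mem (by constructor <;> norm_num)
  filter_upwards [hgev, hmemIoo] with ε hgd hεm
  obtain ⟨hε, hε1⟩ := hεm
  have hε1' : ε ≤ 1 := le_of_lt hε1
  haveI := hGεfin ε hε hε1'
  have hsqInt : Integrable (fun v : E => ‖v‖ ^ 2) (Gε ε) :=
    sq_integrable Gε hGεfin hUI hε hε1'
  have hhInt : Integrable h (Gε ε) := by
    refine Integrable.mono' (hsqInt.const_mul K') hc.aestronglyMeasurable ?_
    exact Filter.Eventually.of_forall fun v => by
      rw [Real.norm_eq_abs]; exact hK' v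
  have hgInt : Integrable g (Gε ε) := hhInt.indicator hmsc
  have hgIntG : Integrable g G := hInt.indicator hmsc
  -- decomposition h = g + s.indicator h
  have hdecomp : ∀ (μ : Measure E), Integrable h μ →
      ∫ v, h v ∂μ = (∫ v, g v ∂μ) + ∫ v in s, h v ∂μ := by
    intro μ hμ
    have : ∫ v, h v ∂μ = (∫ v, g v ∂μ) + ∫ v, s.indicator h v ∂μ := by
      rw [← MeasureTheory.integral_add (hμ.indicator hmsc) (hμ.indicator hms)]
      congr 1
      funext v
      by_cases hv : v ∈ s
      · simp [Set.indicator_of_notMem (Set.notMem_compl_iff.2 hv),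
          Set.indicator_of_mem hv]
      · simp [Set.indicator_of_mem (Set.mem_compl hv), Set.indicator_of_notMem hv]
    rw [this, MeasureTheory.integral_indicator hms]
  -- tail bounds
  have htailGε : |∫ v in s, h v ∂(Gε ε)| ≤ K' * ∫ v in s, ‖v‖ ^ 2 ∂(Gε ε) := by
    calc |∫ v in s, h v ∂(Gε ε)| ≤ ∫ v in s, |h v| ∂(Gε ε) := by
          simpa [Real.norm_eq_abs] using
            MeasureTheory.norm_integral_le_integral_norm (μ := (Gε ε).restrict s) h
      _ ≤ ∫ v in s, K' * ‖v‖ ^ 2 ∂(Gε ε) := by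
          refine MeasureTheory.integral_mono_of_nonneg
            (Filter.Eventually.of_forall fun v => abs_nonneg _)
            ((hsqInt.const_mul K').restrict) ?_
          exact Filter.Eventually.of_forall fun v => hK' v
      _ = K' * ∫ v in s, ‖v‖ ^ 2 ∂(Gε ε) := by rw [MeasureTheory.integral_const_mul]
  have hkeyε : ENNReal.ofReal (ε⁻¹ ^ 2) *
      ∫⁻ v in s, ENNReal.ofReal (‖v‖ ^ 2) ∂(Gε ε) ≤ ENNReal.ofReal (δ / (4 * K')) :=
    le_trans (le_iSup (fun ε' : {ε : ℝ // 0 < ε ∧ ε ≤ 1} =>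
      ENNReal.ofReal ((ε' : ℝ)⁻¹ ^ 2) *
        ∫⁻ v in {v : E | C < ‖v‖}, ENNReal.ofReal (‖v‖ ^ 2) ∂(Gε ε')) ⟨ε, hε, hε1'⟩) hCui
  have htailreal : ε⁻¹ ^ 2 * ∫ v in s, ‖v‖ ^ 2 ∂(Gε ε) ≤ δ / (4 * K') :=
    tail_real (by positivity) (by positivity) hkeyε
  have htailG : |∫ v in s, h v ∂G| ≤ ∫ v in s, |h v| ∂G := by
    simpa [Real.norm_eq_abs] using
      MeasureTheory.norm_integral_le_integral_norm (μ := G.restrict s) h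
  -- combine
  have hsq_set_nonneg : (0:ℝ) ≤ ∫ v in s, ‖v‖ ^ 2 ∂(Gε ε) :=
    MeasureTheory.integral_nonneg fun v => by positivity
  rw [Real.dist_eq]
  have hεinv : (0:ℝ) < ε⁻¹ ^ 2 := by positivity
  calc |ε⁻¹ ^ 2 * ∫ v, h v ∂(Gε ε) - ∫ v, h v ∂G|
      = |ε⁻¹ ^ 2 * (∫ v in s, h v ∂(Gε ε))
          + (ε⁻¹ ^ 2 * (∫ v, g v ∂(Gε ε)) - ∫ v, g v ∂G)
          + (- ∫ v in s, h v ∂G)| := by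
        rw [hdecomp (Gε ε) hhInt, hdecomp G hInt]; ring_nf
    _ ≤ |ε⁻¹ ^ 2 * (∫ v in s, h v ∂(Gε ε))
          + (ε⁻¹ ^ 2 * (∫ v, g v ∂(Gε ε)) - ∫ v, g v ∂G)| + |(- ∫ v in s, h v ∂G)| :=
        abs_add_le _ _
    _ ≤ (|ε⁻¹ ^ 2 * (∫ v in s, h v ∂(Gε ε))|
          + |ε⁻¹ ^ 2 * (∫ v, g v ∂(Gε ε)) - ∫ v, g v ∂G|) + |(- ∫ v in s, h v ∂G)| := by
        gcongr
        exact abs_add_le _ _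
    _ < δ / 4 + δ / 4 + δ / 4 := by
        have e1 : |ε⁻¹ ^ 2 * (∫ v in s, h v ∂(Gε ε))| ≤ δ / 4 := by
          rw [abs_mul, abs_of_pos hεinv]
          calc ε⁻¹ ^ 2 * |∫ v in s, h v ∂(Gε ε)|
              ≤ ε⁻¹ ^ 2 * (K' * ∫ v in s, ‖v‖ ^ 2 ∂(Gε ε)) := by gcongr
            _ = K' * (ε⁻¹ ^ 2 * ∫ v in s, ‖v‖ ^ 2 ∂(Gε ε)) := by ring
            _ ≤ K' * (δ / (4 * K')) := by gcongr
            _ = δ / 4 := by field_simp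
        have e2 : |ε⁻¹ ^ 2 * (∫ v, g v ∂(Gε ε)) - ∫ v, g v ∂G| < δ / 4 := by
          simpa [Real.dist_eq] using hgd
        have e3 : |(- ∫ v in s, h v ∂G)| < δ / 4 := by
          rw [abs_neg]
          exact lt_of_le_of_lt htailG hCg
        linarith
    _ ≤ δ := by linarith


end MTHelpers

section EucHelpers
variable {d : ℕ}

local notation "E" => EuclideanSpace ℝ (Fin d)

lemma coord_abs_le_norm (v : E) (i : Fin d) : |v i| ≤ ‖v‖ := by
  have h1 : v i = ⟪v, EuclideanSpace.single i (1:ℝ)⟫ := by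
    rw [EuclideanSpace.inner_single_right]; simp
  rw [h1]
  calc |⟪v, EuclideanSpace.single i (1:ℝ)⟫| ≤ ‖v‖ * ‖EuclideanSpace.single i (1:ℝ)‖ :=
        abs_real_inner_le_norm _ _
    _ = ‖v‖ := by rw [EuclideanSpace.norm_single]; simp

lemma coord_mul_le (v : E) (i j : Fin d) : |v i * v j| ≤ ‖v‖ ^ 2 := by
  rw [abs_mul]
  calc |v i| * |v j| ≤ ‖v‖ * ‖v‖ :=
        mul_le_mul (coord_abs_le_norm v i) (coord_abs_le_norm v j) (abs_nonneg _) (norm_nonneg _)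
    _ = ‖v‖ ^ 2 := by ring

lemma sum_single_eq (v : E) :
    ∑ i : Fin d, v i • EuclideanSpace.single i (1:ℝ) = v := by
  have := (EuclideanSpace.basisFun (Fin d) ℝ).sum_repr v
  simpa [EuclideanSpace.basisFun_apply, EuclideanSpace.basisFun_repr] using this

lemma bilin_expand (D : E →L[ℝ] E →L[ℝ] ℝ) (v : E) :
    D v v = ∑ i : Fin d, ∑ j : Fin d,
      v i * v j * D (EuclideanSpace.single i (1:ℝ)) (EuclideanSpace.single j (1:ℝ)) := by
  set e : Fin d → E := fun i => EuclideanSpace.single i (1:ℝ) with he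
  have step1 : D v = ∑ i : Fin d, v i • D (e i) := by
    conv_lhs => rw [← sum_single_eq v]
    rw [_root_.map_sum]
    simp only [_root_.map_smul, he]
  have step2 : ∀ i, D (e i) v = ∑ j : Fin d, v j * D (e i) (e j) := by
    intro i
    conv_lhs => rw [← sum_single_eq v]
    rw [_root_.map_sum]
    simp only [_root_.map_smul, smul_eq_mul, he]
  calc D v v = (∑ i : Fin d, v i • D (e i)) v := by rw [step1]
    _ = ∑ i : Fin d, v i * (D (e i) v) := by
        rw [ContinuousLinearMap.sum_apply]
        simp only [ContinuousLinearMap.smul_apply, smul_eq_mul]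
    _ = ∑ i : Fin d, ∑ j : Fin d, v i * v j * D (e i) (e j) := by
        refine Finset.sum_congr rfl fun i _ => ?_
        rw [step2 i, Finset.mul_sum]
        exact Finset.sum_congr rfl fun j _ => by ring

lemma coord_mul_integrable {μ : Measure E} (hsq : Integrable (fun v : E => ‖v‖ ^ 2) μ)
    (i j : Fin d) : Integrable (fun v : E => v i * v j) μ := by
  refine Integrable.mono' hsq ?_ ?_
  · exact (((continuous_apply i).comp (PiLp.continuous_ofLp 2 _)).mul
      ((continuous_apply j).comp (PiLp.continuous_ofLp 2 _))).aestronglyMeasurable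
  · exact Filter.Eventually.of_forall fun v => by
      rw [Real.norm_eq_abs]; exact coord_mul_le v i j

lemma id_integrable {μ : Measure E} [IsFiniteMeasure μ]
    (hsq : Integrable (fun v : E => ‖v‖ ^ 2) μ) : Integrable (fun v : E => v) μ := by
  refine Integrable.mono' ((integrable_const (1:ℝ)).add hsq) continuous_id.aestronglyMeasurable ?_
  refine Filter.Eventually.of_forall fun v => ?_
  simp only [Pi.add_apply]
  rcases le_or_gt ‖v‖ 1 with hv | hv
  · nlinarith [sq_nonneg ‖v‖]
  · nlinarith [norm_nonneg v, sq_nonneg ‖v‖]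

lemma integral_repr (μ : Measure E) [IsFiniteMeasure μ]
    (hsq : Integrable (fun v : E => ‖v‖ ^ 2) μ)
    (F : E →L[ℝ] ℝ) (D : E →L[ℝ] E →L[ℝ] ℝ) (h : E → ℝ) (hh : Integrable h μ) :
    ∫ v, (F v + (1/2) * D v v + h v) ∂μ
      = F (∫ v, v ∂μ)
        + (1/2) * (∑ i : Fin d, ∑ j : Fin d, (∫ v, v i * v j ∂μ) *
            D (EuclideanSpace.single i (1:ℝ)) (EuclideanSpace.single j (1:ℝ)))
        + ∫ v, h v ∂μ := by
  have hid : Integrable (fun v : E => v) μ := id_integrable hsq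
  have hF : Integrable (fun v : E => F v) μ := F.integrable_comp hid
  have hq : Integrable (fun v : E => (1/2) * D v v) μ := by
    refine Integrable.mono' (hsq.const_mul ((1/2) * ‖D‖)) ?_ ?_
    · exact (continuous_const.mul
        (D.continuous₂.comp (continuous_id.prodMk continuous_id))).aestronglyMeasurable
    · refine Filter.Eventually.of_forall fun v => ?_
      rw [Real.norm_eq_abs, abs_mul]
      calc |1/2| * |D v v| ≤ (1/2) * (‖D‖ * ‖v‖ * ‖v‖) := by
            rw [abs_of_pos (by norm_num : (0:ℝ) < 1/2)]
            gcongr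
            calc |D v v| = ‖D v v‖ := (Real.norm_eq_abs _).symm
              _ ≤ ‖D‖ * ‖v‖ * ‖v‖ := D.le_opNorm₂ v v
        _ = (1/2) * ‖D‖ * ‖v‖ ^ 2 := by ring
  have h12 : Integrable (fun v : E => F v + (1/2) * D v v) μ := hF.add hq
  rw [MeasureTheory.integral_add h12 hh, MeasureTheory.integral_add hF hq]
  congr 1
  congr 1
  · exact F.integral_comp_comm hid
  · have hsum : ∀ v : E, (1/2) * D v v = (1/2) * ∑ i : Fin d, ∑ j : Fin d,
        v i * v j * D (EuclideanSpace.single i (1:ℝ)) (EuclideanSpace.single j (1:ℝ)) := by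
      intro v; rw [bilin_expand D v]
    rw [MeasureTheory.integral_congr_ae (Filter.Eventually.of_forall hsum)]
    rw [MeasureTheory.integral_const_mul]
    congr 1
    rw [MeasureTheory.integral_finset_sum _ (fun i _ => ?_)]
    · refine Finset.sum_congr rfl fun i _ => ?_
      rw [MeasureTheory.integral_finset_sum _ (fun j _ => ?_)]
      · exact Finset.sum_congr rfl fun j _ => by
          rw [MeasureTheory.integral_mul_const]
      · exact (coord_mul_integrable hsq i j).mul_const _
    · exact integrable_finset_sum _ (fun j _ => (coord_mul_integrable hsq i j).mul_const _)


end EucHelpers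


set_option maxHeartbeats 2000000 in
/-- the analytic core of Lemma 3 of the paper: asymptotic representation of
the compensating operator at a fixed state.  Under the Lévy approximation conditions on the
jump measures `G^ε` — approximation of the mean values (L2), Poisson approximation of the
intensity kernel (L3) and uniform square-integrability (C3) — the generator-type expression
`ε⁻²∫(φ(u+v) − φ(u)) G^ε(dv) − ε⁻¹⟨a₁, ∇φ(u)⟩` converges, as `ε → 0`, to
`⟨a − a₀, ∇φ(u)⟩ + ½ tr((c − c₀)∇²φ(u)) + ∫(φ(u+v) − φ(u)) G(dv)`
for every bounded `C²` function `φ` with bounded derivatives. -/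
theorem compensating_operator_asymptotic_representation
    (d : ℕ) (hd : 1 ≤ d)
    (Gε : ℝ → Measure (EuclideanSpace ℝ (Fin d)))
    (hGεfin : ∀ ε : ℝ, 0 < ε → ε ≤ 1 → IsFiniteMeasure (Gε ε))
    (G : Measure (EuclideanSpace ℝ (Fin d))) [IsFiniteMeasure G]
    (hGmom : Integrable (fun v : EuclideanSpace ℝ (Fin d) => ‖v‖ + ‖v‖ ^ 2) G)
    (a₀ : EuclideanSpace ℝ (Fin d)) (ha₀ : a₀ = ∫ v, v ∂G)
    (c₀ : Matrix (Fin d) (Fin d) ℝ) (hc₀ : ∀ i j, c₀ i j = ∫ v, v i * v j ∂G)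
    (a₁ a : EuclideanSpace ℝ (Fin d)) (c : Matrix (Fin d) (Fin d) ℝ)
    -- (i) approximation of the mean values
    (θa : ℝ → EuclideanSpace ℝ (Fin d)) (hθa : Tendsto θa (𝓝[>] (0 : ℝ)) (𝓝 0))
    (hmean : ∀ ε : ℝ, 0 < ε → ε ≤ 1 →
      ∫ v, v ∂(Gε ε) = ε • a₁ + ε ^ 2 • a + ε ^ 2 • θa ε)
    -- (ii) approximation of the second moments
    (θc : ℝ → Matrix (Fin d) (Fin d) ℝ)
    (hθc : ∀ i j, Tendsto (fun ε => θc ε i j) (𝓝[>] (0 : ℝ)) (𝓝 0))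
    (hsecond : ∀ ε : ℝ, 0 < ε → ε ≤ 1 → ∀ i j,
      ∫ v, v i * v j ∂(Gε ε) = ε ^ 2 * (c i j + θc ε i j))
    -- (iii) Poisson approximation of the intensity kernel
    (hpoisson : ∀ g : EuclideanSpace ℝ (Fin d) → ℝ, Measurable g →
      (∃ M : ℝ, ∀ v, |g v| ≤ M) →
      Tendsto (fun v => g v / ‖v‖ ^ 2) (𝓝[≠] (0 : EuclideanSpace ℝ (Fin d))) (𝓝 0) →
      Tendsto (fun ε : ℝ => ε⁻¹ ^ 2 * ∫ v, g v ∂(Gε ε)) (𝓝[>] (0 : ℝ))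
        (𝓝 (∫ v, g v ∂G)))
    -- (iv) uniform square-integrability
    (hUI : Tendsto (fun C : ℝ => ⨆ ε : {ε : ℝ // 0 < ε ∧ ε ≤ 1},
        ENNReal.ofReal ((ε : ℝ)⁻¹ ^ 2) *
          ∫⁻ v in {v : EuclideanSpace ℝ (Fin d) | C < ‖v‖},
            ENNReal.ofReal (‖v‖ ^ 2) ∂(Gε ε))
      atTop (𝓝 0))
    -- the test function
    (φ : EuclideanSpace ℝ (Fin d) → ℝ) (hφ : ContDiff ℝ 2 φ)
    (hφb : ∃ M : ℝ, ∀ x, |φ x| ≤ M ∧ ‖fderiv ℝ φ x‖ ≤ M ∧ ‖iteratedFDeriv ℝ 2 φ x‖ ≤ M)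
    (u : EuclideanSpace ℝ (Fin d)) :
    Tendsto (fun ε : ℝ =>
        ε⁻¹ ^ 2 * ∫ v, (φ (u + v) - φ u) ∂(Gε ε) - ε⁻¹ * ⟪a₁, gradient φ u⟫)
      (𝓝[>] (0 : ℝ))
      (𝓝 (⟪a - a₀, gradient φ u⟫
        + (1 / 2) * Matrix.trace ((c - c₀) *
            Matrix.of (fun i j => iteratedFDeriv ℝ 2 φ u
              ![EuclideanSpace.single i (1 : ℝ), EuclideanSpace.single j (1 : ℝ)]))
        + ∫ v, (φ (u + v) - φ u) ∂G)) := by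
  classical
  obtain ⟨M, hM⟩ := hφb
  have hMnn : (0:ℝ) ≤ M := le_trans (abs_nonneg _) (hM u).1
  set e : Fin d → EuclideanSpace ℝ (Fin d) := fun i => EuclideanSpace.single i (1:ℝ) with he
  set F : EuclideanSpace ℝ (Fin d) →L[ℝ] ℝ := fderiv ℝ φ u with hFdef
  set D : EuclideanSpace ℝ (Fin d) →L[ℝ] EuclideanSpace ℝ (Fin d) →L[ℝ] ℝ :=
    fderiv ℝ (fderiv ℝ φ) u with hDdef
  have hsymm : ∀ w z, D w z = D z w := fun w z =>
    (hφ.contDiffAt.isSymmSndFDerivAt (by simp)).eq w z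
  set r : EuclideanSpace ℝ (Fin d) → ℝ :=
    fun v => φ (u + v) - φ u - F v - (1/2) * D v v with hrdef
  have hM2 : ∀ z, ‖iteratedFDeriv ℝ 2 φ z‖ ≤ M := fun z => (hM z).2.2
  have hrbound : ∀ v, |r v| ≤ (2*M) * ‖v‖ ^ 2 := fun v => taylor_global hφ hM2 u hsymm v
  have hrlim : Tendsto (fun v => r v / ‖v‖ ^ 2)
      (𝓝[≠] (0 : EuclideanSpace ℝ (Fin d))) (𝓝 0) := taylor_littleO hφ u hsymm
  have hrcont : Continuous r := by
    have h1 : Continuous fun v : EuclideanSpace ℝ (Fin d) => φ (u + v) :=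
      hφ.continuous.comp (continuous_const.add continuous_id)
    have h3 : Continuous fun v : EuclideanSpace ℝ (Fin d) => D v v :=
      D.continuous₂.comp (continuous_id.prodMk continuous_id)
    exact ((h1.sub continuous_const).sub F.continuous).sub (continuous_const.mul h3)
  have hsqG : Integrable (fun v : EuclideanSpace ℝ (Fin d) => ‖v‖ ^ 2) G := by
    refine Integrable.mono' hGmom ((continuous_norm.pow 2).aestronglyMeasurable) ?_
    refine Filter.Eventually.of_forall fun v => ?_
    rw [Real.norm_eq_abs, abs_of_nonneg (by positivity : (0:ℝ) ≤ ‖v‖^2)]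
    nlinarith [norm_nonneg v]
  have hrIntG : Integrable r G := by
    refine Integrable.mono' (hsqG.const_mul (2*M)) hrcont.aestronglyMeasurable ?_
    exact Filter.Eventually.of_forall fun v => by rw [Real.norm_eq_abs]; exact hrbound v
  have hpt : ∀ v, φ (u + v) - φ u = F v + (1/2) * D v v + r v := fun v => by rw [hrdef]; ring
  have hgrad : ∀ w, ⟪w, gradient φ u⟫ = F w := fun w => by
    rw [real_inner_comm, gradient, hFdef]
    exact InnerProductSpace.toDual_symm_apply
  have hreprG : ∫ v, (φ (u + v) - φ u) ∂G
      = F (∫ v, v ∂G)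
        + (1/2) * (∑ i : Fin d, ∑ j : Fin d, (∫ v, v i * v j ∂G) * D (e i) (e j))
        + ∫ v, r v ∂G := by
    rw [show (fun v : EuclideanSpace ℝ (Fin d) => φ (u+v) - φ u)
        = fun v => F v + (1/2) * D v v + r v from funext hpt]
    exact integral_repr G hsqG F D r hrIntG
  have hmemIoo : ∀ᶠ ε in 𝓝[>] (0:ℝ), ε ∈ Set.Ioo (0:ℝ) 1 :=
    Ioo_mem_nhdsGT_of_mem ⟨le_refl _, by norm_num⟩
  have heq : ∀ᶠ ε in 𝓝[>] (0:ℝ),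
      (F a + F (θa ε)
        + (1/2) * (∑ i : Fin d, ∑ j : Fin d, (c i j + θc ε i j) * D (e i) (e j))
        + ε⁻¹ ^ 2 * ∫ v, r v ∂(Gε ε))
      = ε⁻¹ ^ 2 * ∫ v, (φ (u + v) - φ u) ∂(Gε ε) - ε⁻¹ * ⟪a₁, gradient φ u⟫ := by
    filter_upwards [hmemIoo] with ε hεm
    obtain ⟨hε, hε1⟩ := hεm
    have hε1' : ε ≤ 1 := le_of_lt hε1
    haveI := hGεfin ε hε hε1'
    have hsqε : Integrable (fun v : EuclideanSpace ℝ (Fin d) => ‖v‖ ^ 2) (Gε ε) :=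
      sq_integrable Gε hGεfin hUI hε hε1'
    have hrIntε : Integrable r (Gε ε) := by
      refine Integrable.mono' (hsqε.const_mul (2*M)) hrcont.aestronglyMeasurable ?_
      exact Filter.Eventually.of_forall fun v => by rw [Real.norm_eq_abs]; exact hrbound v
    have hrepr : ∫ v, (φ (u + v) - φ u) ∂(Gε ε)
        = F (∫ v, v ∂(Gε ε))
          + (1/2) * (∑ i : Fin d, ∑ j : Fin d, (∫ v, v i * v j ∂(Gε ε)) * D (e i) (e j))
          + ∫ v, r v ∂(Gε ε) := by
      rw [show (fun v : EuclideanSpace ℝ (Fin d) => φ (u+v) - φ u)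
          = fun v => F v + (1/2) * D v v + r v from funext hpt]
      exact integral_repr (Gε ε) hsqε F D r hrIntε
    rw [hrepr, hmean ε hε hε1']
    have hFlin : F (ε • a₁ + ε^2 • a + ε^2 • θa ε)
        = ε * F a₁ + ε^2 * F a + ε^2 * F (θa ε) := by
      rw [map_add, map_add, F.map_smul, F.map_smul, F.map_smul]
      simp [smul_eq_mul]
    rw [hFlin]
    have hS : (∑ i : Fin d, ∑ j : Fin d, (∫ v, v i * v j ∂(Gε ε)) * D (e i) (e j))
        = ε^2 * ∑ i : Fin d, ∑ j : Fin d, (c i j + θc ε i j) * D (e i) (e j) := by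
      rw [Finset.mul_sum]
      refine Finset.sum_congr rfl fun i _ => ?_
      rw [Finset.mul_sum]
      refine Finset.sum_congr rfl fun j _ => ?_
      rw [hsecond ε hε hε1' i j]
      ring
    rw [hS, hgrad a₁]
    have hεne : ε ≠ 0 := ne_of_gt hε
    field_simp
    ring
  -- the limits of the four summands
  have hT2 : Tendsto (fun ε => F (θa ε)) (𝓝[>] (0:ℝ)) (𝓝 0) := by
    have h0 := (F.continuous.tendsto 0).comp hθa
    simpa [Function.comp_def] using h0
  have hT3 : Tendsto (fun ε => (1/2) *
        (∑ i : Fin d, ∑ j : Fin d, (c i j + θc ε i j) * D (e i) (e j))) (𝓝[>] (0:ℝ))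
      (𝓝 ((1/2) * (∑ i : Fin d, ∑ j : Fin d, c i j * D (e i) (e j)))) := by
    refine Tendsto.const_mul _ ?_
    refine tendsto_finset_sum _ fun i _ => tendsto_finset_sum _ fun j _ => ?_
    have h0 : Tendsto (fun ε => c i j + θc ε i j) (𝓝[>] (0:ℝ)) (𝓝 (c i j + 0)) :=
      tendsto_const_nhds.add (hθc i j)
    rw [add_zero] at h0
    exact h0.mul_const _
  have hT4 : Tendsto (fun ε : ℝ => ε⁻¹ ^ 2 * ∫ v, r v ∂(Gε ε)) (𝓝[>] (0:ℝ))
      (𝓝 (∫ v, r v ∂G)) :=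
    lemmaA Gε hGεfin G hpoisson hUI r hrcont (2*M) hrbound hrlim hrIntG
  have htot := (((tendsto_const_nhds (x := F a) (f := 𝓝[>] (0:ℝ))).add hT2).add hT3).add hT4
  have hfinal := Filter.Tendsto.congr' heq htot
  -- identify the limit
  have hlimeq : (⟪a - a₀, gradient φ u⟫
      + (1 / 2) * Matrix.trace ((c - c₀) *
          Matrix.of (fun i j => iteratedFDeriv ℝ 2 φ u
            ![EuclideanSpace.single i (1 : ℝ), EuclideanSpace.single j (1 : ℝ)]))
      + ∫ v, (φ (u + v) - φ u) ∂G)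
      = F a + 0 + (1/2) * (∑ i : Fin d, ∑ j : Fin d, c i j * D (e i) (e j))
        + ∫ v, r v ∂G := by
    have htr : Matrix.trace ((c - c₀) *
        Matrix.of (fun i j => iteratedFDeriv ℝ 2 φ u
          ![EuclideanSpace.single i (1 : ℝ), EuclideanSpace.single j (1 : ℝ)]))
        = ∑ i : Fin d, ∑ j : Fin d, (c i j - c₀ i j) * D (e i) (e j) := by
      rw [Matrix.trace]
      refine Finset.sum_congr rfl fun i _ => ?_
      rw [Matrix.diag_apply, Matrix.mul_apply]
      refine Finset.sum_congr rfl fun j _ => ?_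
      rw [Matrix.sub_apply, Matrix.of_apply]
      congr 1
      rw [iteratedFDeriv_two_apply]
      simp only [Matrix.cons_val_zero, Matrix.cons_val_one, Matrix.head_cons]
      rw [← hDdef, he]
      exact hsymm _ _
    have hinner : ⟪a - a₀, gradient φ u⟫ = F a - F a₀ := by
      rw [hgrad (a - a₀), map_sub]
    have hFa₀ : F (∫ v, v ∂G) = F a₀ := by rw [ha₀]
    have hc₀sum : (∑ i : Fin d, ∑ j : Fin d, (∫ v, v i * v j ∂G) * D (e i) (e j))
        = ∑ i : Fin d, ∑ j : Fin d, c₀ i j * D (e i) (e j) := by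
      refine Finset.sum_congr rfl fun i _ => Finset.sum_congr rfl fun j _ => ?_
      rw [hc₀ i j]
    have hsplit : (∑ i : Fin d, ∑ j : Fin d, (c i j - c₀ i j) * D (e i) (e j))
        = (∑ i : Fin d, ∑ j : Fin d, c i j * D (e i) (e j))
          - ∑ i : Fin d, ∑ j : Fin d, c₀ i j * D (e i) (e j) := by
      rw [← Finset.sum_sub_distrib]
      refine Finset.sum_congr rfl fun i _ => ?_
      rw [← Finset.sum_sub_distrib]
      exact Finset.sum_congr rfl fun j _ => by ring
    rw [htr, hinner, hsplit, hreprG, hFa₀, hc₀sum]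
    ring
  rw [hlimeq]
  exact hfinal
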